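/- Let n ≥ 1 and k ∈ {1,…,n}. Let x_1,…,x_n ∈ (0,1) be reals with Σ_{i=1}^n x_i = 1, let t ∈ (0,1), and let δ be a real with 0 < δ ≤ 1/2 such that for every subset T ⊆ {1,…,n}, if Σ_{i∈T} x_i ≠ t then |Σ_{i∈T} x_i − t| ≥ δ. Define the real (n+1)×(n+1) matrix A (indices in {0,…,n}) by A_{0,0} = 25, A_{0,i} = A_{i,0} = 5·√(x_i·e^{x_i}) for i ∈ {1,…,n}, A_{i,i} = (1+t)·e^{x_i} for i ∈ {1,…,n}, and A_{i,j} = 0 for all distinct i,j ∈ {1,…,n}. Set OPT = 25·(1+t)^{k−1}·e^t. Then for every subset S ⊆ {0,…,n} with |S| = k+1: if 0 ∈ S and Σ_{i∈S\{0}} x_i = t, then det(A_S) = OPT; otherwise det(A_S) ≤ e^{−δ}(1+δ)·OPT. -/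

import Mathlib

open Matrix Finset

lemma arrow_det {ι : Type*} [Fintype ι] [DecidableEq ι] (a : ℝ) (b c d : ι → ℝ)
    (hd : ∀ i, d i ≠ 0) :
    (Matrix.fromBlocks (Matrix.of fun _ _ : Unit => a) (Matrix.of fun _ j => b j)
      (Matrix.of fun i _ => c i) (Matrix.diagonal d)).det
      = (∏ i, d i) * (a - ∑ i, b i * c i / d i) := by
  letI : Invertible (Matrix.diagonal d) :=
    ⟨Matrix.diagonal fun i => (d i)⁻¹, by
      rw [Matrix.diagonal_mul_diagonal, ← Matrix.diagonal_one]
      exact congrArg _ (funext fun i => inv_mul_cancel₀ (hd i)), by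
      rw [Matrix.diagonal_mul_diagonal, ← Matrix.diagonal_one]
      exact congrArg _ (funext fun i => mul_inv_cancel₀ (hd i))⟩
  rw [Matrix.det_fromBlocks₂₂]
  have h1 : ⅟(Matrix.diagonal d) = Matrix.diagonal fun i => (d i)⁻¹ := rfl
  rw [h1, Matrix.det_diagonal, Matrix.det_unique]
  congr 1
  simp only [Matrix.sub_apply, Matrix.mul_apply, Matrix.of_apply]
  congr 1
  refine Finset.sum_congr rfl fun i _ => ?_
  rw [Finset.sum_eq_single i (fun j _ hj => by
    rw [Matrix.diagonal_apply_ne _ hj, mul_zero]) (by simp)]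
  rw [Matrix.diagonal_apply_eq]
  field_simp

lemma key_ineq {δ u : ℝ} (hδ0 : 0 < δ) (hδhalf : δ ≤ 1/2) (hu : δ ≤ |u|) :
    Real.exp (-u) * (1 + u) ≤ Real.exp (-δ) * (1 + δ) := by
  rcases le_abs.mp hu with h | h
  · have hv : 0 ≤ u - δ := by linarith
    have h1 := Real.add_one_le_exp (u - δ)
    have h2 : Real.exp (-u) * Real.exp (u - δ) = Real.exp (-δ) := by
      rw [← Real.exp_add]; ring_nf
    have h3 : 1 + u ≤ Real.exp (u - δ) * (1 + δ) := by nlinarith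
    calc Real.exp (-u) * (1 + u) ≤ Real.exp (-u) * (Real.exp (u - δ) * (1 + δ)) :=
          mul_le_mul_of_nonneg_left h3 (Real.exp_pos _).le
      _ = Real.exp (-δ) * (1 + δ) := by rw [← mul_assoc, h2]
  · have hRHS : (1 : ℝ) - δ ^ 2 ≤ Real.exp (-δ) * (1 + δ) := by
      have := Real.add_one_le_exp (-δ)
      nlinarith
    rcases le_or_gt (1 + u) 0 with hneg | hpos
    · have : Real.exp (-u) * (1 + u) ≤ 0 :=
        mul_nonpos_of_nonneg_of_nonpos (Real.exp_pos _).le hneg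
      nlinarith
    · set w := -u with hw
      have hw1 : w < 1 := by simp only [hw]; linarith
      have hwδ : δ ≤ w := by simp only [hw]; linarith
      have step1 : Real.exp w * (1 - w) ≤ Real.exp δ * (1 - δ) := by
        have hv : 0 ≤ w - δ := by linarith
        have h1 : 1 - (w - δ) ≤ Real.exp (-(w - δ)) := by
          have := Real.add_one_le_exp (-(w - δ)); linarith
        have h2 : Real.exp (w - δ) * Real.exp (-(w - δ)) = 1 := by
          rw [← Real.exp_add]; simp
        have h3 : Real.exp w = Real.exp δ * Real.exp (w - δ) := by
          rw [← Real.exp_add]; ring_nf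
        have h4 : Real.exp (w - δ) * (1 - w) ≤ 1 - δ := by
          have hδw : 1 - w ≤ (1 - δ) * (1 - (w - δ)) := by nlinarith
          calc Real.exp (w - δ) * (1 - w) ≤ Real.exp (w - δ) * ((1 - δ) * (1 - (w - δ))) :=
                mul_le_mul_of_nonneg_left hδw (Real.exp_pos _).le
            _ ≤ Real.exp (w - δ) * ((1 - δ) * Real.exp (-(w - δ))) :=
                mul_le_mul_of_nonneg_left
                  (mul_le_mul_of_nonneg_left h1 (by linarith)) (Real.exp_pos _).le
            _ = 1 - δ := by rw [show Real.exp (w-δ) * ((1-δ) * Real.exp (-(w-δ))) = (Real.exp (w-δ) * Real.exp (-(w-δ))) * (1-δ) by ring, h2, one_mul]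
        calc Real.exp w * (1 - w) = Real.exp δ * (Real.exp (w - δ) * (1 - w)) := by rw [h3]; ring
          _ ≤ Real.exp δ * (1 - δ) := by nlinarith [Real.exp_pos δ]
      have step2 : Real.exp δ * (1 - δ) ≤ Real.exp (-δ) * (1 + δ) := by
        have hb : Real.exp (2 * δ) ≤ 1 + 2*δ + 2*δ^2 + 16/9*δ^3 := by
          have h2δ : 0 ≤ 2*δ := by linarith
          have h2δ' : 2*δ ≤ 1 := by linarith
          have := Real.exp_bound' h2δ h2δ' (n := 3) (by norm_num)
          simp [Finset.sum_range_succ, Nat.factorial] at this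
          nlinarith
        have hpq : Real.exp δ * Real.exp (-δ) = 1 := by rw [← Real.exp_add]; simp
        have h2 : Real.exp (2*δ) = Real.exp δ * Real.exp δ := by rw [← Real.exp_add]; ring_nf
        rw [h2] at hb
        nlinarith [Real.exp_pos δ, Real.exp_pos (-δ)]
      have heq : Real.exp (-u) * (1 + u) = Real.exp w * (1 - w) := by
        rw [hw]; ring_nf
      rw [heq]
      exact step1.trans step2

noncomputable def principalDet {ι : Type*} [DecidableEq ι] (A : Matrix ι ι ℝ) (S : Finset ι) : ℝ :=
  (A.submatrix (fun i : S => (i : ι)) (fun j : S => (j : ι))).det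

theorem stmt_3 (n k : ℕ) (hn : 1 ≤ n) (hk1 : 1 ≤ k) (hkn : k ≤ n)
    (x : Fin (n + 1) → ℝ) (hx : ∀ i : Fin (n + 1), i ≠ 0 → x i ∈ Set.Ioo (0 : ℝ) 1)
    (hsum : ∑ i ∈ Finset.univ.erase (0 : Fin (n + 1)), x i = 1)
    (t : ℝ) (ht : t ∈ Set.Ioo (0 : ℝ) 1)
    (δ : ℝ) (hδ0 : 0 < δ) (hδhalf : δ ≤ 1 / 2)
    (hgap : ∀ T : Finset (Fin (n + 1)), 0 ∉ T →
      (∑ i ∈ T, x i) ≠ t → δ ≤ |(∑ i ∈ T, x i) - t|)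
    (A : Matrix (Fin (n + 1)) (Fin (n + 1)) ℝ)
    (hA00 : A 0 0 = 25)
    (hA0i : ∀ i : Fin (n + 1), i ≠ 0 → A 0 i = 5 * Real.sqrt (x i * Real.exp (x i)))
    (hAi0 : ∀ i : Fin (n + 1), i ≠ 0 → A i 0 = 5 * Real.sqrt (x i * Real.exp (x i)))
    (hAii : ∀ i : Fin (n + 1), i ≠ 0 → A i i = (1 + t) * Real.exp (x i))
    (hAij : ∀ i j : Fin (n + 1), i ≠ 0 → j ≠ 0 → i ≠ j → A i j = 0) :
    ∀ S : Finset (Fin (n + 1)), S.card = k + 1 →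
      ((0 ∈ S ∧ ∑ i ∈ S.erase 0, x i = t) →
        principalDet A S = 25 * (1 + t) ^ (k - 1) * Real.exp t) ∧
      (¬(0 ∈ S ∧ ∑ i ∈ S.erase 0, x i = t) →
        principalDet A S ≤ Real.exp (-δ) * (1 + δ) * (25 * (1 + t) ^ (k - 1) * Real.exp t)) := by
  obtain ⟨ht0, ht1⟩ := ht
  have h1t : (0 : ℝ) < 1 + t := by linarith
  -- sums of x over 0-free sets lie in [0,1]
  have hsub : ∀ T : Finset (Fin (n + 1)), 0 ∉ T →
      0 ≤ (∑ i ∈ T, x i) ∧ (∑ i ∈ T, x i) ≤ 1 := by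
    intro T hT0
    constructor
    · exact Finset.sum_nonneg fun i hi => (hx i (fun h => hT0 (h ▸ hi))).1.le
    · rw [← hsum]
      refine Finset.sum_le_sum_of_subset_of_nonneg ?_ ?_
      · intro i hi
        exact Finset.mem_erase.2 ⟨fun h => hT0 (h ▸ hi), Finset.mem_univ i⟩
      · intro i hi _
        exact (hx i (Finset.mem_erase.1 hi).1).1.le
  intro S hScard
  -- main determinant formula when 0 ∈ S
  have main : 0 ∈ S → principalDet A S =
      25 * (1 + t) ^ (k - 1) * Real.exp (∑ i ∈ S.erase 0, x i)
        * (1 + t - ∑ i ∈ S.erase 0, x i) := by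
    intro h0
    set T := S.erase 0 with hT
    have hT0 : (0 : Fin (n + 1)) ∉ T := Finset.notMem_erase _ _
    have hTcard : T.card = k := by
      rw [hT, Finset.card_erase_of_mem h0, hScard]; rfl
    have hne : ∀ j : {i // i ∈ T}, (j : Fin (n + 1)) ≠ 0 := fun j =>
      Finset.ne_of_mem_erase j.2
    let e : Unit ⊕ {i // i ∈ T} ≃ {i // i ∈ S} :=
      { toFun := Sum.elim (fun _ => ⟨0, h0⟩)
          (fun j => ⟨j.1, Finset.mem_of_mem_erase j.2⟩)
        invFun := fun i => if h : i.1 = 0 then Sum.inl () else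
          Sum.inr ⟨i.1, Finset.mem_erase.2 ⟨h, i.2⟩⟩
        left_inv := by
          rintro (⟨⟩ | ⟨j, hj⟩)
          · simp
          · simp [Finset.ne_of_mem_erase hj]
        right_inv := by
          rintro ⟨i, hi⟩
          by_cases h : i = 0
          · subst h; simp
          · simp [h] }
    have hdet : principalDet A S =
        ((A.submatrix (fun i : S => (i : Fin (n + 1)))
          (fun j : S => (j : Fin (n + 1)))).submatrix e e).det :=
      (Matrix.det_submatrix_equiv_self e _).symm
    have hmat : ((A.submatrix (fun i : S => (i : Fin (n + 1)))
          (fun j : S => (j : Fin (n + 1)))).submatrix e e) =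
        Matrix.fromBlocks (Matrix.of fun _ _ : Unit => (25 : ℝ))
          (Matrix.of fun _ (j : {i // i ∈ T}) => 5 * Real.sqrt (x j * Real.exp (x j)))
          (Matrix.of fun (i : {i // i ∈ T}) _ => 5 * Real.sqrt (x i * Real.exp (x i)))
          (Matrix.diagonal fun i : {i // i ∈ T} => (1 + t) * Real.exp (x i)) := by
      ext i j
      cases i with
      | inl iu =>
        cases j with
        | inl ju => simpa [e] using hA00
        | inr j => simpa [e] using hA0i j (hne j)
      | inr i =>
        cases j with
        | inl ju => simpa [e] using hAi0 i (hne i)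
        | inr j =>
          by_cases hij : i = j
          · subst hij
            simpa [e, Matrix.diagonal_apply_eq] using hAii i (hne i)
          · have hij' : (i : Fin (n + 1)) ≠ j := fun h => hij (Subtype.ext h)
            simpa [e, Matrix.diagonal_apply_ne _ hij] using hAij i j (hne i) (hne j) hij'
    rw [hdet, hmat, arrow_det _ _ _ _
      (fun i => ne_of_gt (mul_pos h1t (Real.exp_pos _)))]
    have hxpos : ∀ j : {i // i ∈ T}, 0 ≤ x j * Real.exp (x j) := fun j =>
      mul_nonneg (hx j (hne j)).1.le (Real.exp_pos _).le
    have hprod : (∏ i : {i // i ∈ T}, ((1 + t) * Real.exp (x i))) =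
        (1 + t) ^ k * Real.exp (∑ i ∈ T, x i) := by
      rw [Finset.prod_mul_distrib, Finset.prod_const, ← Real.exp_sum]
      congr 1
      · rw [Finset.card_univ, Fintype.card_coe, hTcard]
      · congr 1
        exact Finset.sum_coe_sort T x
    have hsumterm : (∑ i : {i // i ∈ T},
        (5 * Real.sqrt (x i * Real.exp (x i))) * (5 * Real.sqrt (x i * Real.exp (x i)))
          / ((1 + t) * Real.exp (x i))) = 25 * (∑ i ∈ T, x i) / (1 + t) := by
      have : ∀ i : {i // i ∈ T},
          (5 * Real.sqrt (x i * Real.exp (x i))) * (5 * Real.sqrt (x i * Real.exp (x i)))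
            / ((1 + t) * Real.exp (x i)) = 25 * x i / (1 + t) := by
        intro i
        rw [show (5 * Real.sqrt (x i * Real.exp (x i))) * (5 * Real.sqrt (x i * Real.exp (x i)))
            = 25 * (Real.sqrt (x i * Real.exp (x i)) * Real.sqrt (x i * Real.exp (x i))) by ring,
          Real.mul_self_sqrt (hxpos i)]
        rw [div_eq_div_iff (by positivity) (by positivity)]
        ring
      rw [Finset.sum_congr rfl fun i _ => this i, ← Finset.sum_div, ← Finset.mul_sum]
      congr 2
      exact Finset.sum_coe_sort T x
    rw [hprod, hsumterm]
    have hk : (1 + t) ^ k = (1 + t) ^ (k - 1) * (1 + t) := by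
      rw [← pow_succ, Nat.sub_add_cancel hk1]
    rw [hk]
    field_simp
  constructor
  · rintro ⟨h0, hs⟩
    rw [main h0, hs]
    ring
  · intro hnot
    by_cases h0 : 0 ∈ S
    · -- 0 ∈ S but sum ≠ t
      have hs : (∑ i ∈ S.erase 0, x i) ≠ t := fun h => hnot ⟨h0, h⟩
      set s := ∑ i ∈ S.erase 0, x i with hsdef
      have hgap' : δ ≤ |t - s| := by
        rw [abs_sub_comm]
        exact hgap _ (Finset.notMem_erase _ _) hs
      have key := key_ineq hδ0 hδhalf hgap'
      have hexp : Real.exp s * (1 + t - s) ≤ Real.exp (-δ) * (1 + δ) * Real.exp t := by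
        have h1 : Real.exp s = Real.exp t * Real.exp (-(t - s)) := by
          rw [← Real.exp_add]; ring_nf
        have h2 : Real.exp s * (1 + t - s) = Real.exp t * (Real.exp (-(t-s)) * (1 + (t - s))) := by
          rw [h1]; ring
        rw [h2]
        calc Real.exp t * (Real.exp (-(t-s)) * (1 + (t - s)))
            ≤ Real.exp t * (Real.exp (-δ) * (1 + δ)) :=
              mul_le_mul_of_nonneg_left key (Real.exp_pos _).le
          _ = Real.exp (-δ) * (1 + δ) * Real.exp t := by ring
      rw [main h0]
      have hc : (0 : ℝ) < 25 * (1 + t) ^ (k - 1) := by positivity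
      calc 25 * (1 + t) ^ (k - 1) * Real.exp s * (1 + t - s)
          = 25 * (1 + t) ^ (k - 1) * (Real.exp s * (1 + t - s)) := by ring
        _ ≤ 25 * (1 + t) ^ (k - 1) * (Real.exp (-δ) * (1 + δ) * Real.exp t) :=
            mul_le_mul_of_nonneg_left hexp hc.le
        _ = Real.exp (-δ) * (1 + δ) * (25 * (1 + t) ^ (k - 1) * Real.exp t) := by ring
    · -- 0 ∉ S : diagonal submatrix
      have hneS : ∀ j : {i // i ∈ S}, (j : Fin (n + 1)) ≠ 0 := fun j h =>
        h0 (h ▸ j.2)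
      have hmat : (A.submatrix (fun i : S => (i : Fin (n + 1)))
          (fun j : S => (j : Fin (n + 1)))) =
          Matrix.diagonal fun i : {i // i ∈ S} => (1 + t) * Real.exp (x i) := by
        ext i j
        by_cases hij : i = j
        · subst hij
          simpa [Matrix.diagonal_apply_eq] using hAii i (hneS i)
        · have hij' : (i : Fin (n + 1)) ≠ j := fun h => hij (Subtype.ext h)
          simpa [Matrix.diagonal_apply_ne _ hij] using hAij i j (hneS i) (hneS j) hij'
      have hdet : principalDet A S = (1 + t) ^ (k + 1) * Real.exp (∑ i ∈ S, x i) := by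
        rw [principalDet, hmat, Matrix.det_diagonal, Finset.prod_mul_distrib,
          Finset.prod_const, ← Real.exp_sum]
        congr 1
        · congr 1
          rw [Finset.card_univ, Fintype.card_coe, hScard]
        · congr 1
          exact Finset.sum_coe_sort S x
      rw [hdet]
      set s := ∑ i ∈ S, x i with hsdef
      obtain ⟨hs0, hs1⟩ := hsub S h0
      have hes : Real.exp s ≤ 2.7182818286 := by
        calc Real.exp s ≤ Real.exp 1 := Real.exp_le_exp.2 hs1
          _ ≤ 2.7182818286 := Real.exp_one_lt_d9.le
      have het : (1 : ℝ) ≤ Real.exp t := by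
        have := Real.add_one_le_exp t; linarith
      have heδ : (3 : ℝ)/4 ≤ Real.exp (-δ) * (1 + δ) := by
        have := Real.add_one_le_exp (-δ)
        nlinarith
      have hkey : (1 + t) ^ 2 * Real.exp s ≤ 25 * (Real.exp (-δ) * (1 + δ) * Real.exp t) := by
        have h4 : (1 + t) ^ 2 ≤ 4 := by nlinarith
        have hl : (1 + t) ^ 2 * Real.exp s ≤ 4 * 2.7182818286 := by
          have := (Real.exp_pos s).le
          nlinarith
        have hr : 25 * (3/4 : ℝ) * 1 ≤ 25 * (Real.exp (-δ) * (1 + δ) * Real.exp t) := by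
          nlinarith [Real.exp_pos (-δ)]
        calc (1 + t) ^ 2 * Real.exp s ≤ 4 * 2.7182818286 := hl
          _ ≤ 25 * (3/4 : ℝ) * 1 := by norm_num
          _ ≤ _ := hr
      have hkk : (1 + t) ^ (k + 1) = (1 + t) ^ (k - 1) * (1 + t) ^ 2 := by
        rw [← pow_add]
        congr 1
        omega
      have hp : (0 : ℝ) < (1 + t) ^ (k - 1) := by positivity
      calc (1 + t) ^ (k + 1) * Real.exp s
          = (1 + t) ^ (k - 1) * ((1 + t) ^ 2 * Real.exp s) := by rw [hkk]; ring
        _ ≤ (1 + t) ^ (k - 1) * (25 * (Real.exp (-δ) * (1 + δ) * Real.exp t)) :=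
            mul_le_mul_of_nonneg_left hkey hp.le
        _ = Real.exp (-δ) * (1 + δ) * (25 * (1 + t) ^ (k - 1) * Real.exp t) := by ring
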